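/- Let (X, d) be a metric space and x₀ x₁ ⋯ x_R a geodesic path in a graph G' on a point set P ⊆ X, where vertices are adjacent in G' whenever their Voronoi cells are within distance Δ. Suppose z_i and z_ℓ (with i + 1 < ℓ) are points associated to edges (x_i, x_{i+1}) and (x_ℓ, x_{ℓ+1}), with z_i within distance Δ/2 of the Voronoi cell V(x_i) and z_ℓ within distance Δ/2 of V(x_{ℓ+1}). If d(z_i, z_ℓ) < Δ/2, then the Voronoi cells V(x_i) and V(x_{ℓ+1}) are within distance ≤ 2Δ of each other (via the cell containing the midpoint of z_i z_ℓ), contradicting geodesicity; hence d(z_i, z_ℓ) ≥ Δ/2 whenever ℓ > i + 1. -/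
import Mathlib

private lemma path_walk {ι : Type*} (G' : SimpleGraph ι) (R : ℕ) (x : ℕ → ι)
    (hpath : ∀ i < R, G'.Adj (x i) (x (i + 1))) :
    ∀ k j, j ≤ k → k ≤ R → ∃ w : G'.Walk (x j) (x k), w.length = k - j := by
  intro k
  induction k with
  | zero =>
    intro j hj _
    interval_cases j
    exact ⟨.nil, rfl⟩
  | succ k ih =>
    intro j hj hkR
    rcases eq_or_lt_of_le hj with h | h
    · exact ⟨(SimpleGraph.Walk.nil : G'.Walk (x j) (x j)).copy rfl (congrArg x h), by simp [h]⟩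
    · obtain ⟨w, hw⟩ := ih j (Nat.lt_succ_iff.mp h) (le_trans (Nat.le_succ k) hkR)
      refine ⟨w.append (hpath k (by omega)).toWalk, ?_⟩
      simp [SimpleGraph.Walk.length_append, hw]
      omega

/-- Separation of ball centers along a graph geodesic: if cells within distance `Δ` of each
other give adjacent vertices, the cells cover the space (which has midpoints), the path
`x₀ … x_R` is a geodesic in `G'` (each step an edge and `dist_{G'}(x₀, x_R) = R`), and each
`z_i` is within `Δ/2` of the cells of `x_i` and of `x_{i+1}`, then non-consecutive centers
satisfy `dist (z_i) (z_ℓ) ≥ Δ/2`. -/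
theorem geodesic_centers_separated {X ι : Type*} [MetricSpace X] (Δ : ℝ) (hΔ : 0 < Δ)
    (V : ι → Set X) (hcover : ∀ p : X, ∃ a : ι, p ∈ V a)
    (G' : SimpleGraph ι)
    (hadj : ∀ a b : ι, a ≠ b → (∃ p ∈ V a, ∃ q ∈ V b, dist p q ≤ Δ) → G'.Adj a b)
    (hmid : ∀ p q : X, ∃ m : X, dist p m = dist p q / 2 ∧ dist m q = dist p q / 2)
    (R : ℕ) (x : ℕ → ι)
    (hpath : ∀ i < R, G'.Adj (x i) (x (i + 1)))
    (hgeo : G'.dist (x 0) (x R) = R)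
    (z : ℕ → X)
    (hzi : ∀ i < R, ∃ p ∈ V (x i), dist p (z i) ≤ Δ / 2)
    (hzl : ∀ i < R, ∃ q ∈ V (x (i + 1)), dist q (z i) ≤ Δ / 2) :
    ∀ i ℓ : ℕ, i + 1 < ℓ → ℓ < R → Δ / 2 ≤ dist (z i) (z ℓ) := by
  intro i ℓ hil hlR
  by_contra hcon
  push_neg at hcon
  have hiR : i < R := by omega
  obtain ⟨p, hp, hpz⟩ := hzi i hiR
  obtain ⟨q, hq, hqz⟩ := hzl ℓ hlR
  obtain ⟨m, hm1, hm2⟩ := hmid (z i) (z ℓ)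
  obtain ⟨a, ha⟩ := hcover m
  -- p ∈ V (x i), m close to p; q ∈ V (x (ℓ+1)), m close to q
  have hpm : dist p m ≤ Δ := by
    calc dist p m ≤ dist p (z i) + dist (z i) m := dist_triangle _ _ _
    _ ≤ Δ / 2 + Δ / 4 := by
        have : dist (z i) m ≤ Δ / 4 := by rw [hm1]; linarith
        linarith
    _ ≤ Δ := by linarith
  have hmq : dist m q ≤ Δ := by
    calc dist m q ≤ dist m (z ℓ) + dist (z ℓ) q := dist_triangle _ _ _
    _ ≤ Δ / 4 + Δ / 2 := by
        have h1 : dist m (z ℓ) ≤ Δ / 4 := by rw [hm2]; linarith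
        have h2 : dist (z ℓ) q = dist q (z ℓ) := dist_comm _ _
        linarith [hqz, h2 ▸ le_refl (dist (z ℓ) q)]
    _ ≤ Δ := by linarith
  have hqm : dist (z ℓ) q ≤ Δ / 2 := by rw [dist_comm]; exact hqz
  -- shortcut walk of length ≤ 2 from x i to x (ℓ+1)
  have hshort : ∃ w : G'.Walk (x i) (x (ℓ + 1)), w.length ≤ 2 := by
    by_cases hxx : x i = x (ℓ + 1)
    · exact ⟨SimpleGraph.Walk.nil.copy rfl hxx, by simp⟩
    · by_cases hai : a = x i
      · have : G'.Adj (x i) (x (ℓ + 1)) :=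
          hadj (x i) (x (ℓ + 1)) hxx ⟨m, hai ▸ ha, q, hq, hmq⟩
        exact ⟨this.toWalk, by simp [SimpleGraph.Adj.toWalk]⟩
      · have h1 : G'.Adj (x i) a :=
          hadj (x i) a (fun h => hai h.symm) ⟨p, hp, m, ha, hpm⟩
        by_cases hal : a = x (ℓ + 1)
        · exact ⟨(hal ▸ h1).toWalk, by simp [SimpleGraph.Adj.toWalk]⟩
        · have h2 : G'.Adj a (x (ℓ + 1)) :=
            hadj a (x (ℓ + 1)) hal ⟨m, ha, q, hq, hmq⟩
          exact ⟨h1.toWalk.append h2.toWalk, by simp [SimpleGraph.Adj.toWalk]⟩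
  obtain ⟨ws, hws⟩ := hshort
  obtain ⟨w1, hw1⟩ := path_walk G' R x hpath i 0 (Nat.zero_le _) (le_of_lt hiR)
  obtain ⟨w3, hw3⟩ := path_walk G' R x hpath R (ℓ + 1) (by omega) le_rfl
  have hdist := SimpleGraph.dist_le ((w1.append ws).append w3)
  rw [hgeo] at hdist
  simp only [SimpleGraph.Walk.length_append, hw1, hw3] at hdist
  omega
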